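/- Let π and π̂ be unitary representations of a group G on Hilbert spaces H and Ĥ, with π irreducible. Let R: A ⊆ H → Ĥ be a closable densely defined operator on a π-invariant dense domain A satisfying R π(g) = χ(g)^{-1} π̂(g) R on A for a character χ of G. Then the closure R̄ of R has π-invariant domain and satisfies R̄ π(g) = χ(g)^{-1} π̂(g) R̄ on dom(R̄), for all g ∈ G. -/
import Mathlib


open MeasureTheory LinearPMap

/-- Let `π`, `π̂` be unitary representations of a group `G` on Hilbert spaces `H`, `Ĥ`, with
`π` irreducible. Let `R : A ⊆ H → Ĥ` be a closable densely defined operator with π-invariant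
dense domain `A`, satisfying `R π(g) = χ(g)⁻¹ π̂(g) R` on `A` for a positive character `χ` of
`G`. Then the closure `R̄` of `R` has π-invariant domain and satisfies
`R̄ π(g) = χ(g)⁻¹ π̂(g) R̄` on `dom R̄`, for all `g ∈ G`. -/
theorem closure_intertwining
    {G : Type*} [Group G]
    {H H' : Type*} [NormedAddCommGroup H] [InnerProductSpace ℂ H] [CompleteSpace H]
    [NormedAddCommGroup H'] [InnerProductSpace ℂ H'] [CompleteSpace H']
    (π : G →* (H ≃ₗᵢ[ℂ] H)) (πh : G →* (H' ≃ₗᵢ[ℂ] H'))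
    (hirr : ∀ V : Submodule ℂ H, IsClosed (V : Set H) →
      (∀ g : G, ∀ x ∈ V, π g x ∈ V) → V = ⊥ ∨ V = ⊤)
    (χ : G → ℝ) (hχpos : ∀ g, 0 < χ g) (hχmul : ∀ g₁ g₂, χ (g₁ * g₂) = χ g₁ * χ g₂)
    (R : H →ₗ.[ℂ] H') (hRdense : Dense (R.domain : Set H)) (hRclosable : R.IsClosable)
    (hRdominv : ∀ g : G, ∀ x ∈ R.domain, π g x ∈ R.domain)
    (hRint : ∀ g : G, ∀ x : R.domain, ∀ hx' : π g x ∈ R.domain,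
      R ⟨π g x, hx'⟩ = ((χ g : ℂ))⁻¹ • πh g (R x)) :
    ∀ g : G, ∀ x : R.closure.domain, ∃ hx' : π g x ∈ R.closure.domain,
      R.closure ⟨π g x, hx'⟩ = ((χ g : ℂ))⁻¹ • πh g (R.closure x) := by
  intro g x
  -- the continuous map on H × H'
  set f : H × H' → H × H' := fun p => (π g p.1, ((χ g : ℂ))⁻¹ • πh g p.2) with hf
  have hfcont : Continuous f := by
    apply Continuous.prodMk
    · exact ((π g).toLinearIsometry.continuous).comp continuous_fst
    · exact (continuous_const.smul
        (((πh g).toLinearIsometry.continuous).comp continuous_snd))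
  -- f maps graph R into graph R
  have hmaps : Set.MapsTo f (R.graph : Set (H × H')) (R.graph : Set (H × H')) := by
    rintro p hp
    rw [SetLike.mem_coe, R.mem_graph_iff] at hp
    obtain ⟨y, hy1, hy2⟩ := hp
    have hdom : π g (y : H) ∈ R.domain := hRdominv g y y.2
    rw [SetLike.mem_coe, R.mem_graph_iff]
    refine ⟨⟨π g (y : H), hdom⟩, ?_, ?_⟩
    · simp [hf, ← hy1]
    · rw [hRint g y hdom, hf]
      simp [← hy1, ← hy2]
  -- hence maps the closure of the graph into itself
  have hmaps' : Set.MapsTo f (closure (R.graph : Set (H × H')))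
      (closure (R.graph : Set (H × H'))) := by
    intro p hp
    exact closure_mono hmaps.image_subset
      (image_closure_subset_closure_image hfcont (Set.mem_image_of_mem f hp))
  -- (x, R.closure x) is in the closure of the graph
  have hgr : ((x : H), R.closure x) ∈ R.closure.graph := R.closure.mem_graph x
  rw [← hRclosable.graph_closure_eq_closure_graph] at hgr
  have hgr' : ((x : H), R.closure x) ∈ closure (R.graph : Set (H × H')) := by
    rw [← Submodule.topologicalClosure_coe]
    exact hgr
  have hmem : f ((x : H), R.closure x) ∈ closure (R.graph : Set (H × H')) :=
    hmaps' hgr'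
  have hmem' : (π g (x : H), ((χ g : ℂ))⁻¹ • πh g (R.closure x)) ∈ R.closure.graph := by
    rw [← hRclosable.graph_closure_eq_closure_graph]
    exact hmem
  rw [R.closure.mem_graph_iff] at hmem'
  obtain ⟨z, hz1, hz2⟩ := hmem'
  simp only [] at hz1 hz2
  have hdom : π g (x : H) ∈ R.closure.domain := by rw [← hz1]; exact z.2
  refine ⟨hdom, ?_⟩
  have : (⟨π g (x : H), hdom⟩ : R.closure.domain) = z := Subtype.ext hz1.symm
  rw [this, hz2]
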